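/- arXiv:2002.06847 — 4 statements merged into one kernel-verified Lean document; each statement's English description precedes it below -/
import Mathlib

section
/- Let A be a unital locally matrix algebra over a field F and let A' be a unital subalgebra of A with 1_A ∈ A' and an F-algebra isomorphism A' ≅ M_n(F) for some n ≥ 1. Let C be the centralizer of A' in A. Then A is isomorphic as an F-algebra to A' ⊗_F C, and hence to the matrix algebra M_n(C). -/
open scoped TensorProduct

open Matrix in
theorem matrix_units_algEquiv
    (F : Type*) [Field F] (A : Type*) [Ring A] [Algebra F A]
    (n : ℕ) (A' : Subalgebra F A)
    (φ : A' ≃ₐ[F] Matrix (Fin n) (Fin n) F) :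
    Nonempty (A ≃ₐ[F] Matrix (Fin n) (Fin n) (Subalgebra.centralizer F (A' : Set A))) := by
  set C := Subalgebra.centralizer F (A' : Set A) with hC
  set e : Fin n → Fin n → A := fun i j => ↑(φ.symm (Matrix.single i j 1)) with he
  have he_mem : ∀ i j, e i j ∈ A' := fun i j => (φ.symm (Matrix.single i j 1)).2
  have he_mul : ∀ i j k l, e i j * e k l = if j = k then e i l else 0 := by
    intro i j k l
    have h1 : e i j * e k l =
        ↑(φ.symm (Matrix.single i j 1 * Matrix.single k l (1 : F))) := by
      rw [_root_.map_mul]; rfl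
    by_cases h : j = k
    · subst h
      rw [h1, Matrix.single_mul_single_same, one_mul, if_pos rfl]
    · rw [h1, Matrix.single_mul_single_of_ne (h := h), _root_.map_zero, if_neg h]
      rfl
  have he_sum : ∑ i, e i i = 1 := by
    have h1 : (1 : Matrix (Fin n) (Fin n) F) = ∑ i, Matrix.single i i 1 := by
      conv_lhs => rw [Matrix.matrix_eq_sum_single (1 : Matrix (Fin n) (Fin n) F)]
      refine Finset.sum_congr rfl fun i _ => ?_
      rw [Finset.sum_eq_single i]
      · rw [Matrix.one_apply_eq]
      · intro j _ hj
        rw [Matrix.one_apply_ne' hj]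
        simp
      · simp
    have h2 : (∑ i, e i i) = ↑(φ.symm (∑ i, Matrix.single i i (1:F))) := by
      rw [_root_.map_sum, AddSubmonoidClass.coe_finset_sum]
    rw [h2, ← h1, _root_.map_one, OneMemClass.coe_one]
  -- every element of A' is a combination of the e i j
  have hspan : ∀ x (hx : x ∈ A'), x = ∑ i, ∑ j, (φ ⟨x, hx⟩ i j) • e i j := by
    intro x hx
    set m := φ ⟨x, hx⟩ with hm
    have hx2 : x = ↑(φ.symm m) := by rw [hm, φ.symm_apply_apply]
    rw [hx2]
    conv_lhs => rw [Matrix.matrix_eq_sum_single m]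
    rw [_root_.map_sum, AddSubmonoidClass.coe_finset_sum]
    refine Finset.sum_congr rfl fun i _ => ?_
    rw [_root_.map_sum, AddSubmonoidClass.coe_finset_sum]
    refine Finset.sum_congr rfl fun j _ => ?_
    have h3 : Matrix.single i j (m i j) = m i j • Matrix.single i j (1:F) := by
      rw [Matrix.smul_single, smul_eq_mul, mul_one]
    rw [h3, _root_.map_smul, SetLike.val_smul]
  have hCcomm : ∀ (c : C) (p q : Fin n), e p q * ↑c = ↑c * e p q := by
    intro c p q
    exact (Subalgebra.mem_centralizer_iff F).mp c.2 (e p q) (he_mem p q)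
  have hCmem : ∀ (c : A), (∀ p q, e p q * c = c * e p q) → c ∈ C := by
    intro c hc
    rw [hC, Subalgebra.mem_centralizer_iff]
    intro g hg
    rw [hspan g hg, Finset.sum_mul, Finset.mul_sum]
    refine Finset.sum_congr rfl fun i _ => ?_
    rw [Finset.sum_mul, Finset.mul_sum]
    refine Finset.sum_congr rfl fun j _ => ?_
    rw [smul_mul_assoc, mul_smul_comm, hc]
  -- the multiplication map Matrix n n C → A
  set θ : Matrix (Fin n) (Fin n) C → A := fun M => ∑ i, ∑ j, ((M i j : A) * e i j) with hθ
  have term : ∀ (a : A) (c : C) (i j p q : Fin n),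
      (a * e i j) * ((c : A) * e p q) = (a * (c : A)) * (if j = p then e i q else 0) := by
    intro a c i j p q
    rw [mul_assoc a, ← mul_assoc (e i j), hCcomm c i j, mul_assoc (c : A), ← mul_assoc a,
      he_mul]
  have hmul : ∀ M N, θ (M * N) = θ M * θ N := by
    intro M N
    have lhs : θ (M * N) = ∑ i, ∑ j, ∑ k, ((M i k : A) * (N k j : A)) * e i j := by
      simp only [hθ, Matrix.mul_apply, AddSubmonoidClass.coe_finset_sum, MulMemClass.coe_mul,
        Finset.sum_mul]
    have rhs : θ M * θ N = ∑ i, ∑ j, ∑ q, ((M i j : A) * (N j q : A)) * e i q := by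
      rw [hθ]
      rw [Finset.sum_mul]
      refine Finset.sum_congr rfl fun i _ => ?_
      rw [Finset.sum_mul]
      refine Finset.sum_congr rfl fun j _ => ?_
      rw [Finset.mul_sum]
      have hterm : ∀ p, (((M i j : C) : A) * e i j) * (∑ q, ((N p q : C) : A) * e p q)
          = ∑ q, (if j = p then (((M i j : C) : A) * ((N p q : C) : A)) * e i q else 0) := by
        intro p
        rw [Finset.mul_sum]
        refine Finset.sum_congr rfl fun q _ => ?_
        rw [term, mul_ite, mul_zero]
      simp only [hterm]
      rw [Finset.sum_comm]
      simp [Finset.sum_ite_eq]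
    rw [lhs, rhs]
    exact Finset.sum_congr rfl fun i _ => Finset.sum_comm
  have hone : θ 1 = 1 := by
    rw [hθ]
    simp only [Matrix.one_apply, apply_ite (fun c : C => (c : A)), OneMemClass.coe_one,
      ZeroMemClass.coe_zero, ite_mul, one_mul, zero_mul, Finset.sum_ite_eq,
      Finset.mem_univ, if_true]
    exact he_sum
  have hcomm : ∀ r : F, θ (algebraMap F (Matrix (Fin n) (Fin n) C) r) = algebraMap F A r := by
    intro r
    rw [hθ]
    simp only [Matrix.algebraMap_matrix_apply, apply_ite (fun c : C => (c : A)),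
      ZeroMemClass.coe_zero, ite_mul, zero_mul, Finset.sum_ite_eq, Finset.mem_univ, if_true]
    have : ∀ i : Fin n, ((algebraMap F C r : C) : A) * e i i = algebraMap F A r * e i i := by
      intro i; rfl
    rw [Finset.sum_congr rfl fun i _ => this i, ← Finset.mul_sum, he_sum, mul_one]
  have hadd : ∀ M N, θ (M + N) = θ M + θ N := by
    intro M N
    rw [hθ]
    simp [add_mul, Finset.sum_add_distrib]
  -- the inverse map
  have hcent : ∀ (a : A) (i j : Fin n), (∑ k, e k i * a * e j k) ∈ C := by
    intro a i j
    apply hCmem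
    intro p q
    rw [Finset.mul_sum, Finset.sum_mul]
    have l : ∀ k, e p q * (e k i * a * e j k) = if q = k then e p i * a * e j k else 0 := by
      intro k
      rw [← mul_assoc, ← mul_assoc, he_mul]
      split <;> simp
    have r : ∀ k, (e k i * a * e j k) * e p q = if k = p then e k i * a * e j q else 0 := by
      intro k
      rw [mul_assoc, he_mul]
      split <;> simp [mul_assoc]
    simp only [l, r]
    simp [Finset.sum_ite_eq, Finset.sum_ite_eq']
  set ψ : A → Matrix (Fin n) (Fin n) C := fun a i j => ⟨∑ k, e k i * a * e j k, hcent a i j⟩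
    with hψ
  have hright : ∀ a, θ (ψ a) = a := by
    intro a
    have h1 : ∀ i j, ((ψ a i j : C) : A) * e i j = (e i i * a) * e j j := by
      intro i j
      show (∑ k, e k i * a * e j k) * e i j = _
      rw [Finset.sum_mul, Finset.sum_eq_single i]
      · rw [mul_assoc, he_mul, if_pos rfl]
      · intro k _ hk
        rw [mul_assoc, he_mul, if_neg hk, mul_zero]
      · simp
    rw [hθ]
    simp only [h1]
    simp only [← Finset.mul_sum, he_sum, mul_one]
    rw [← Finset.sum_mul, he_sum, one_mul]
  have hleft : ∀ M, ψ (θ M) = M := by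
    intro M
    ext i j
    show ∑ k, e k i * θ M * e j k = ((M i j : C) : A)
    have hθM : θ M = ∑ p, ∑ q, ((M p q : C) : A) * e p q := rfl
    have innerp : ∀ k p, p ≠ i →
        (e k i * (∑ q, ((M p q : C) : A) * e p q)) * e j k = 0 := by
      intro k p hp
      rw [Finset.mul_sum, Finset.sum_mul]
      refine Finset.sum_eq_zero fun q _ => ?_
      rw [← mul_assoc (e k i), hCcomm (M p q) k i, mul_assoc ((M p q : C) : A), he_mul,
        if_neg (Ne.symm hp)]
      simp
    have innerq : ∀ k q, q ≠ j →
        (e k i * (((M i q : C) : A) * e i q)) * e j k = 0 := by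
      intro k q hq
      rw [← mul_assoc (e k i), mul_assoc (e k i * ((M i q : C) : A)), he_mul, if_neg hq]
      simp
    have key : ∀ k, e k i * θ M * e j k = ((M i j : C) : A) * e k k := by
      intro k
      rw [hθM, Finset.mul_sum, Finset.sum_mul,
        Finset.sum_eq_single i (fun p _ hp => innerp k p hp) (by simp),
        Finset.mul_sum, Finset.sum_mul,
        Finset.sum_eq_single j (fun q _ hq => innerq k q hq) (by simp),
        ← mul_assoc (e k i), hCcomm (M i j) k i, mul_assoc ((M i j : C) : A),
        he_mul, if_pos rfl, mul_assoc, he_mul, if_pos rfl]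
    simp only [key]
    rw [← Finset.mul_sum, he_sum, mul_one]
  let Θ : Matrix (Fin n) (Fin n) C →ₐ[F] A :=
    { toFun := θ
      map_one' := hone
      map_mul' := hmul
      map_zero' := by show θ 0 = 0; rw [hθ]; simp
      map_add' := hadd
      commutes' := hcomm }
  have hbij : Function.Bijective Θ :=
    ⟨Function.LeftInverse.injective hleft, fun a => ⟨ψ a, hright a⟩⟩
  exact ⟨(AlgEquiv.ofBijective Θ hbij).symm⟩


/-- A unital locally matrix algebra over a field `F`: every finite subset lies in a
unital subalgebra (automatically containing `1`) isomorphic to a full matrix algebra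
`M_n(F)` for some `n ≥ 1`. -/
def IsUnitalLocallyMatrix (F : Type*) [Field F] (A : Type*) [Ring A] [Algebra F A] : Prop :=
  ∀ s : Finset A, ∃ (n : ℕ) (B : Subalgebra F A), 1 ≤ n ∧ (↑s : Set A) ⊆ B ∧
    Nonempty (B ≃ₐ[F] Matrix (Fin n) (Fin n) F)

/-- `D(A)`: the set of positive integers `n` such that `A` has a unital subalgebra
(containing `1`) isomorphic to `M_n(F)`. -/
def matrixDegrees (F : Type*) [Field F] (A : Type*) [Ring A] [Algebra F A] : Set ℕ :=
  {n | 1 ≤ n ∧ ∃ B : Subalgebra F A, Nonempty (B ≃ₐ[F] Matrix (Fin n) (Fin n) F)}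

/-- If `A` is a unital locally matrix algebra and `A'` is a unital subalgebra with
`A' ≅ M_n(F)`, and `C` is the centralizer of `A'` in `A`, then `A ≅ A' ⊗_F C ≅ M_n(C)`
as `F`-algebras. -/
theorem tensor_decomposition_over_matrix_subalgebra
    (F : Type*) [Field F] (A : Type*) [Ring A] [Algebra F A]
    (hA : IsUnitalLocallyMatrix F A)
    (n : ℕ) (hn : 1 ≤ n) (A' : Subalgebra F A)
    (φ : A' ≃ₐ[F] Matrix (Fin n) (Fin n) F) :
    Nonempty (A ≃ₐ[F] (A' ⊗[F] Subalgebra.centralizer F (A' : Set A))) ∧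
      Nonempty (A ≃ₐ[F] Matrix (Fin n) (Fin n) (Subalgebra.centralizer F (A' : Set A))) := by
  obtain ⟨ψ⟩ := matrix_units_algEquiv F A n A' φ
  refine ⟨⟨ψ.trans ?_⟩, ⟨ψ⟩⟩
  exact (matrixEquivTensor (Fin n) F (Subalgebra.centralizer F (A' : Set A))).trans
    ((Algebra.TensorProduct.comm F _ _).trans
      (Algebra.TensorProduct.congr φ.symm AlgEquiv.refl))
end

section
/- Let A be a unital locally matrix algebra over a field F and let k ≥ 1. Then the matrix algebra M_k(A) is a unital locally matrix algebra over F and st(M_k(A)) = k·st(A), i.e., {m : m divides some d ∈ D(M_k(A))} = {m : m divides k·d for some d ∈ D(A)}. -/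
open Matrix

/-- If there is a unital algebra hom `M_d(F) → M_N(F)` with `d ≥ 1`, then `d ∣ N`. -/
lemma ulm_algHom_matrix_dvd {F : Type*} [Field F] {d N : ℕ} (hd : 0 < d)
    (f : Matrix (Fin d) (Fin d) F →ₐ[F] Matrix (Fin N) (Fin N) F) : d ∣ N := by
  classical
  set g : Matrix (Fin d) (Fin d) F →ₐ[F] ((Fin N → F) →ₗ[F] (Fin N → F)) :=
    (Matrix.toLinAlgEquiv' : Matrix (Fin N) (Fin N) F ≃ₐ[F] _).toAlgHom.comp f with hg
  set E : Fin d → Fin d → Matrix (Fin d) (Fin d) F := fun i j => Matrix.single i j 1 with hE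
  obtain ⟨i₀⟩ : Nonempty (Fin d) := ⟨⟨0, hd⟩⟩
  have hmul : ∀ (i j l m : Fin d) (x : Fin N → F),
      g (E i j) (g (E l m) x) = g (E i j * E l m) x := by
    intro i j l m x
    rw [_root_.map_mul]; rfl
  set V : Submodule F (Fin N → F) := LinearMap.range (g (E i₀ i₀)) with hV
  have hmem : ∀ (i : Fin d) (x : Fin N → F), g (E i₀ i) x ∈ V := by
    intro i x
    refine ⟨g (E i₀ i) x, ?_⟩
    rw [hmul]
    congr 2
    simp [hE]
  have hVfix : ∀ v ∈ V, g (E i₀ i₀) v = v := by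
    rintro v ⟨w, rfl⟩
    rw [hmul]
    congr 2
    simp [hE]
  set φ : (Fin N → F) →ₗ[F] (Fin d → V) :=
    LinearMap.pi fun i => LinearMap.codRestrict V (g (E i₀ i)) (hmem i) with hφ
  set ψ : (Fin d → V) →ₗ[F] (Fin N → F) :=
    ∑ i : Fin d, (g (E i i₀)).comp (V.subtype.comp (LinearMap.proj i)) with hψ
  have hsum1 : (∑ i : Fin d, E i i) = 1 := by
    ext a b
    simp only [hE, Matrix.sum_apply, Matrix.single, of_apply]
    rw [Finset.sum_eq_single a (fun x _ hx => if_neg fun h => hx h.1) (by simp)]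
    by_cases h : a = b <;> simp [h, Matrix.one_apply]
  have h1 : ψ.comp φ = LinearMap.id := by
    refine LinearMap.ext fun x => ?_
    have expand : (ψ.comp φ) x = ∑ i : Fin d, g (E i i₀) ((g (E i₀ i)) x) := by
      simp [hψ, hφ, LinearMap.sum_apply]
    have step : ∀ i : Fin d, g (E i i₀) ((g (E i₀ i)) x) = g (E i i) x := by
      intro i
      rw [hmul]
      congr 2
      simp [hE]
    rw [expand, Finset.sum_congr rfl fun i _ => step i, ← LinearMap.sum_apply, ← map_sum,
      hsum1, _root_.map_one, Module.End.one_apply, LinearMap.id_apply]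
  have h2 : φ.comp ψ = LinearMap.id := by
    refine LinearMap.ext fun y => funext fun i => Subtype.ext ?_
    simp only [hφ, hψ, LinearMap.comp_apply, LinearMap.pi_apply, LinearMap.codRestrict_apply,
      LinearMap.id_apply, LinearMap.sum_apply, Submodule.subtype_apply, LinearMap.proj_apply,
      map_sum, AddSubmonoidClass.coe_finset_sum]
    have step : ∀ j : Fin d, g (E i₀ i) ((g (E j i₀)) ((y j : Fin N → F)))
        = if j = i then g (E i₀ i₀) (y i) else 0 := by
      intro j
      rw [hmul]
      by_cases h : j = i
      · subst h
        simp [hE]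
      · have hne : i ≠ j := fun h' => h h'.symm
        rw [show E i₀ i * E j i₀ = 0 by simp [hE, Matrix.single_mul_single_of_ne, hne],
          map_zero]
        simp [h]
    rw [Finset.sum_congr rfl fun j _ => step j,
      Finset.sum_ite_eq' Finset.univ i (fun _ => g (E i₀ i₀) (y i))]
    simp [hVfix _ (y i).2]
  have equiv : (Fin N → F) ≃ₗ[F] (Fin d → V) := LinearEquiv.ofLinear φ ψ h2 h1
  have hN : N = Module.finrank F (Fin N → F) := by
    rw [Module.finrank_pi, Fintype.card_fin]
  have hdr : Module.finrank F (Fin N → F) = d * Module.finrank F V := by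
    rw [equiv.finrank_eq, Module.finrank_pi_fintype, Finset.sum_const, Finset.card_univ,
      Fintype.card_fin, smul_eq_mul]
  exact ⟨Module.finrank F V, hN.trans hdr⟩

/-- Matrices over a subalgebra `B ≃ M_n(F)` form a subalgebra of `M_k(A)` isomorphic
to `M_{k·n}(F)`. -/
lemma ulm_matrix_subalgebra {F : Type*} [Field F] {A : Type*} [Ring A] [Algebra F A]
    {k n : ℕ} (B : Subalgebra F A) (g : B ≃ₐ[F] Matrix (Fin n) (Fin n) F) :
    ∃ C : Subalgebra F (Matrix (Fin k) (Fin k) A),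
      (∀ x : Matrix (Fin k) (Fin k) A, (∀ i j, x i j ∈ B) → x ∈ C) ∧
      Nonempty (C ≃ₐ[F] Matrix (Fin (k * n)) (Fin (k * n)) F) := by
  classical
  set ι : Matrix (Fin k) (Fin k) B →ₐ[F] Matrix (Fin k) (Fin k) A :=
    AlgHom.mapMatrix B.val with hι
  have hinj : Function.Injective ι := by
    intro M M' h
    ext i j
    have h2 : (ι M) i j = (ι M') i j := by rw [h]
    simpa [hι, AlgHom.mapMatrix_apply, Matrix.map_apply] using Subtype.ext h2
  refine ⟨ι.range, ?_, ?_⟩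
  · intro x hx
    exact ⟨Matrix.of fun i j => (⟨x i j, hx i j⟩ : B), by ext i j; rfl⟩
  · refine ⟨((AlgEquiv.ofInjective ι hinj).symm.trans
      ((g.mapMatrix.trans (Matrix.compAlgEquiv (Fin k) (Fin n) F F)).trans
        (Matrix.reindexAlgEquiv F F finProdFinEquiv)))⟩



/-- For a unital locally matrix algebra `A` and `k ≥ 1`, the matrix algebra `M_k(A)` is
a unital locally matrix algebra and `st(M_k(A)) = k · st(A)`, encoded by divisor sets. -/
theorem matrix_isUnitalLocallyMatrix_and_steinitz
    (F : Type*) [Field F] (A : Type*) [Ring A] [Algebra F A]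
    (hA : IsUnitalLocallyMatrix F A) (k : ℕ) (hk : 1 ≤ k) :
    IsUnitalLocallyMatrix F (Matrix (Fin k) (Fin k) A) ∧
      {m : ℕ | ∃ d ∈ matrixDegrees F (Matrix (Fin k) (Fin k) A), m ∣ d} =
        {m : ℕ | ∃ d ∈ matrixDegrees F A, m ∣ k * d} := by
  classical
  constructor
  · -- local matrix property
    intro s
    set t : Finset A := s.biUnion fun M =>
      Finset.image (fun p : Fin k × Fin k => M p.1 p.2) Finset.univ with ht
    obtain ⟨n, B, hn, hsub, ⟨g⟩⟩ := hA t
    obtain ⟨C, hC1, ⟨e⟩⟩ := ulm_matrix_subalgebra (k := k) B g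
    refine ⟨k * n, C, Nat.one_le_iff_ne_zero.mpr (by positivity), ?_, ⟨e⟩⟩
    intro M hM
    refine hC1 M fun i j => hsub ?_
    simp only [ht, Finset.coe_biUnion, Set.mem_iUnion, Finset.mem_coe]
    exact ⟨M, hM, Finset.mem_image.mpr ⟨(i, j), Finset.mem_univ _, rfl⟩⟩
  · -- equality of divisor sets
    ext m
    simp only [Set.mem_setOf_eq]
    constructor
    · rintro ⟨d, ⟨hd1, C, ⟨gC⟩⟩, hmd⟩
      -- entries of a finite spanning family of C
      set s : Finset (Matrix (Fin k) (Fin k) A) :=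
        Finset.image (fun p : Fin d × Fin d =>
          ((gC.symm (Matrix.single p.1 p.2 1) : C) : Matrix (Fin k) (Fin k) A))
          Finset.univ with hs
      set t : Finset A := s.biUnion fun M =>
        Finset.image (fun p : Fin k × Fin k => M p.1 p.2) Finset.univ with ht
      obtain ⟨n, B, hn, hsub, ⟨g⟩⟩ := hA t
      obtain ⟨C', hC'1, ⟨e⟩⟩ := ulm_matrix_subalgebra (k := k) B g
      -- every generator lies in C'
      have hgen : ∀ p : Fin d × Fin d,
          ((gC.symm (Matrix.single p.1 p.2 1) : C) : Matrix (Fin k) (Fin k) A) ∈ C' := by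
        intro p
        refine hC'1 _ fun i j => hsub ?_
        simp only [ht, Finset.coe_biUnion, Set.mem_iUnion, Finset.mem_coe]
        exact ⟨_, Finset.mem_image.mpr ⟨p, Finset.mem_univ _, rfl⟩,
          Finset.mem_image.mpr ⟨(i, j), Finset.mem_univ _, rfl⟩⟩
      -- C ≤ C'
      have hle : C ≤ C' := by
        intro x hx
        set M := gC ⟨x, hx⟩ with hM
        have hxeq : x = ∑ i : Fin d, ∑ j : Fin d,
            M i j • ((gC.symm (Matrix.single i j 1) : C) : Matrix (Fin k) (Fin k) A) := by
          have h0 : (⟨x, hx⟩ : C) = ∑ i : Fin d, ∑ j : Fin d,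
              M i j • gC.symm (Matrix.single i j 1) := by
            apply gC.injective
            simp only [map_sum, _root_.map_smul, gC.apply_symm_apply]
            conv_lhs => rw [Matrix.matrix_eq_sum_single (gC ⟨x, hx⟩)]
            refine Finset.sum_congr rfl fun i _ => Finset.sum_congr rfl fun j _ => ?_
            rw [hM, Matrix.smul_single, smul_eq_mul, mul_one]
          calc x = ((⟨x, hx⟩ : C) : Matrix (Fin k) (Fin k) A) := rfl
            _ = _ := by rw [h0]; push_cast; rfl
        rw [hxeq]
        exact Submodule.sum_mem C'.toSubmodule fun i _ => Submodule.sum_mem _ fun j _ =>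
          Submodule.smul_mem _ _ (hgen (i, j))
      -- algebra hom M_d(F) → M_{kn}(F)
      have hdvd : d ∣ k * n :=
        ulm_algHom_matrix_dvd hd1
          (e.toAlgHom.comp ((Subalgebra.inclusion hle).comp gC.symm.toAlgHom))
      exact ⟨n, ⟨hn, B, ⟨g⟩⟩, hmd.trans hdvd⟩
    · rintro ⟨d, ⟨hd1, B, ⟨g⟩⟩, hm⟩
      obtain ⟨C, _, ⟨e⟩⟩ := ulm_matrix_subalgebra (k := k) B g
      exact ⟨k * d, ⟨Nat.one_le_iff_ne_zero.mpr (by positivity), C, ⟨e⟩⟩, hm⟩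
end

section
/- Let A and B be unital locally matrix algebras over a field F. Then A ⊗_F B is a unital locally matrix algebra over F and st(A ⊗_F B) = st(A)·st(B), i.e., {m : m divides some d ∈ D(A ⊗_F B)} = {m : m divides a·b for some a ∈ D(A) and b ∈ D(B)}. -/
set_option synthInstance.maxHeartbeats 1000000
set_option maxHeartbeats 1000000

open scoped TensorProduct

section Aux

open scoped Matrix

variable {F : Type*} [Field F]

private lemma sum_stdBasisMatrix_diag (d : ℕ) :
    ∑ i : Fin d, Matrix.single i i (1 : F) = 1 := by
  ext a b
  rw [Matrix.sum_apply]
  by_cases h : a = b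
  · subst h
    rw [Finset.sum_eq_single a (fun i _ hi => Matrix.single_apply_of_row_ne hi _ _ _)
      (by simp)]
    simp
  · rw [Finset.sum_eq_zero fun i _ =>
      Matrix.single_apply_of_ne _ _ _ _ _ (by rintro ⟨rfl, rfl⟩; exact h rfl)]
    simp [Matrix.one_apply, h]

/-- If there is a unital algebra map `M_d(F) →ₐ M_k(F)` with `0 < d`, then `d ∣ k`. -/
private lemma matrix_algHom_dvd {d k : ℕ} (hd : 0 < d)
    (φ : Matrix (Fin d) (Fin d) F →ₐ[F] Matrix (Fin k) (Fin k) F) : d ∣ k := by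
  classical
  set E : Fin d → Fin d → Matrix (Fin d) (Fin d) F :=
    fun i j => Matrix.single i j 1 with hE
  have hmul : ∀ i j i' j' : Fin d,
      φ (E i j) * φ (E i' j') = if j = i' then φ (E i j') else 0 := by
    intro i j i' j'
    rw [← map_mul]
    split_ifs with h
    · subst h
      simp only [hE, Matrix.single_mul_single_same, one_mul]
    · rw [hE]
      rw [Matrix.single_mul_single_of_ne (h := h), map_zero]
  set P : Fin d → Matrix (Fin k) (Fin k) F := fun i => φ (E i i) with hP
  have hPsum : ∑ i, P i = 1 := by
    rw [hP, ← map_sum, hE]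
    rw [sum_stdBasisMatrix_diag d, map_one]
  have hPP : ∀ i j, P i * P j = if i = j then P i else 0 := by
    intro i j
    rcases eq_or_ne i j with rfl | h
    · simpa using hmul i i i i
    · simpa [h] using hmul i i j j
  set z : Fin d := ⟨0, hd⟩ with hz
  set V : Fin d → Submodule F (Fin k → F) := fun i => LinearMap.range (P i).mulVecLin with hV
  have hfix : ∀ i (v : Fin k → F), v ∈ V i → P i *ᵥ v = v := by
    rintro i v ⟨u, rfl⟩
    simp only [Matrix.mulVecLin_apply, Matrix.mulVec_mulVec]
    rw [show P i * P i = P i by simpa using hPP i i]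
  have hzero : ∀ i j (v : Fin k → F), i ≠ j → v ∈ V j → P i *ᵥ v = 0 := by
    rintro i j v hij ⟨u, rfl⟩
    simp only [Matrix.mulVecLin_apply, Matrix.mulVec_mulVec]
    rw [show P i * P j = 0 by simpa [hij] using hPP i j, Matrix.zero_mulVec]
  -- the pi equivalence
  let g : (Fin k → F) →ₗ[F] (Π i, V i) := LinearMap.pi fun i => ((P i).mulVecLin).rangeRestrict
  let h : (Π i : Fin d, V i) →ₗ[F] (Fin k → F) :=
    ∑ i, (V i).subtype.comp (LinearMap.proj i)
  have hhw : ∀ w : Π i, V i, h w = ∑ i, ((w i : Fin k → F)) := by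
    intro w
    simp [h]
  have hgv : ∀ (v : Fin k → F) (i : Fin d), ((g v i : Fin k → F)) = P i *ᵥ v := fun v i => rfl
  have e : (Fin k → F) ≃ₗ[F] Π i, V i := by
    refine LinearEquiv.ofLinear g h ?_ ?_
    · apply LinearMap.ext
      intro w
      funext i
      apply Subtype.ext
      show ((g (h w) i : Fin k → F)) = w i
      rw [hgv, hhw]
      rw [← Matrix.mulVecLin_apply, map_sum]
      rw [Finset.sum_eq_single i (fun j _ hj => by
        simpa using hzero i j _ hj.symm (w j).2) (by simp)]
      simpa using hfix i _ (w i).2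
    · apply LinearMap.ext
      intro v
      show h (g v) = v
      rw [hhw]
      have : ∀ i, ((g v i : Fin k → F)) = P i *ᵥ v := hgv v
      simp only [this]
      have : ∑ i, P i *ᵥ v = (∑ i, P i) *ᵥ v := by
        ext j
        simp only [Matrix.mulVec, dotProduct, Matrix.sum_apply, Finset.sum_apply,
          Finset.sum_mul]
        exact Finset.sum_comm
      rw [this, hPsum, Matrix.one_mulVec]
  -- all V i have the same finrank
  have hrk : ∀ i, Module.finrank F (V i) = Module.finrank F (V z) := by
    intro i
    set X : Matrix (Fin k) (Fin k) F := φ (E i z) with hX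
    set Y : Matrix (Fin k) (Fin k) F := φ (E z i) with hY
    have hXY : X * Y = P i := by simpa using hmul i z z i
    have hYX : Y * X = P z := by simpa using hmul z i i z
    have hPX : P i * X = X := by simpa using hmul i i i z
    have hPY : P z * Y = Y := by simpa using hmul z z z i
    have memX : ∀ v : V z, X *ᵥ (v : Fin k → F) ∈ V i := by
      intro v
      exact ⟨X *ᵥ (v : Fin k → F), by
        rw [Matrix.mulVecLin_apply, Matrix.mulVec_mulVec, hPX]⟩
    have memY : ∀ v : V i, Y *ᵥ (v : Fin k → F) ∈ V z := by
      intro v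
      exact ⟨Y *ᵥ (v : Fin k → F), by
        rw [Matrix.mulVecLin_apply, Matrix.mulVec_mulVec, hPY]⟩
    have eq : V z ≃ₗ[F] V i := by
      refine LinearEquiv.ofLinear
        (LinearMap.codRestrict (V i) (X.mulVecLin ∘ₗ (V z).subtype) fun v => memX v)
        (LinearMap.codRestrict (V z) (Y.mulVecLin ∘ₗ (V i).subtype) fun v => memY v)
        ?_ ?_
      · apply LinearMap.ext
        intro v
        apply Subtype.ext
        show X *ᵥ (Y *ᵥ (v : Fin k → F)) = (v : Fin k → F)
        rw [Matrix.mulVec_mulVec, hXY]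
        exact hfix i _ v.2
      · apply LinearMap.ext
        intro v
        apply Subtype.ext
        show Y *ᵥ (X *ᵥ (v : Fin k → F)) = (v : Fin k → F)
        rw [Matrix.mulVec_mulVec, hYX]
        exact hfix z _ v.2
    exact eq.symm.finrank_eq
  have hks : k = d * Module.finrank F (V z) := by
    have h1 : Module.finrank F (Fin k → F) = Module.finrank F (Π i, V i) := e.finrank_eq
    rw [Module.finrank_pi, Module.finrank_pi_fintype] at h1
    simp only [hrk] at h1
    simpa [Finset.sum_const, Fintype.card_fin] using h1
  exact ⟨_, hks⟩

variable {A B : Type*} [Ring A] [Ring B] [Algebra F A] [Algebra F B]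

/-- `M_a(F) ⊗ M_b(F) ≃ₐ M_{ab}(F)`. -/
private noncomputable def matrixTensorMatrix (a b : ℕ) :
    (Matrix (Fin a) (Fin a) F) ⊗[F] (Matrix (Fin b) (Fin b) F) ≃ₐ[F]
      Matrix (Fin (a * b)) (Fin (a * b)) F :=
  (Algebra.TensorProduct.comm F _ _).trans <|
    ((matrixEquivTensor (Fin a) F (Matrix (Fin b) (Fin b) F)).symm.trans <|
      ((Matrix.compAlgEquiv (Fin a) (Fin b) F F).trans
        (Matrix.reindexAlgEquiv F F finProdFinEquiv)))

/-- The tensor product of two matrix subalgebras is a matrix subalgebra. -/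
private lemma tensor_subalg (BA : Subalgebra F A) (BB : Subalgebra F B) {a b : ℕ}
    (eA : BA ≃ₐ[F] Matrix (Fin a) (Fin a) F) (eB : BB ≃ₐ[F] Matrix (Fin b) (Fin b) F) :
    ∃ C : Subalgebra F (A ⊗[F] B),
      (∀ x ∈ BA, ∀ y ∈ BB, x ⊗ₜ[F] y ∈ C) ∧
      Nonempty (C ≃ₐ[F] Matrix (Fin (a * b)) (Fin (a * b)) F) := by
  set Φ := Algebra.TensorProduct.map BA.val BB.val with hΦdef
  have hinj : Function.Injective Φ := by
    have h1 : Φ.toLinearMap = TensorProduct.map BA.val.toLinearMap BB.val.toLinearMap := by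
      apply TensorProduct.ext'
      intro x y
      rfl
    have h2 : Function.Injective (TensorProduct.map BA.val.toLinearMap BB.val.toLinearMap) := by
      rw [← LinearMap.lTensor_comp_rTensor]
      exact (Module.Flat.lTensor_preserves_injective_linearMap _ Subtype.val_injective).comp
        (Module.Flat.rTensor_preserves_injective_linearMap _ Subtype.val_injective)
    have h3 : ⇑Φ = ⇑(TensorProduct.map BA.val.toLinearMap BB.val.toLinearMap) := by
      rw [← h1]; rfl
    rw [show (⇑Φ : BA ⊗[F] BB → A ⊗[F] B) = _ from h3]
    exact h2
  refine ⟨Φ.range, ?_, ⟨?_⟩⟩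
  · intro x hx y hy
    exact ⟨(⟨x, hx⟩ : BA) ⊗ₜ[F] (⟨y, hy⟩ : BB), rfl⟩
  · exact ((AlgEquiv.ofInjective Φ hinj).symm.trans
      ((Algebra.TensorProduct.congr eA eB).trans (matrixTensorMatrix a b)))

/-- Any finite subset of `A ⊗ B` lies in a matrix subalgebra of degree `a*b` with
`a ∈ D(A)`, `b ∈ D(B)`. -/
private lemma finset_subalg (hA : IsUnitalLocallyMatrix F A) (hB : IsUnitalLocallyMatrix F B)
    (s : Finset (A ⊗[F] B)) :
    ∃ (a b : ℕ) (C : Subalgebra F (A ⊗[F] B)), 1 ≤ a ∧ 1 ≤ b ∧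
      a ∈ matrixDegrees F A ∧ b ∈ matrixDegrees F B ∧ (↑s : Set (A ⊗[F] B)) ⊆ C ∧
      Nonempty (C ≃ₐ[F] Matrix (Fin (a * b)) (Fin (a * b)) F) := by
  classical
  choose rep hrep using fun x : A ⊗[F] B => TensorProduct.exists_finset x
  set sA : Finset A := s.biUnion fun x => (rep x).image Prod.fst with hsAdef
  set sB : Finset B := s.biUnion fun x => (rep x).image Prod.snd with hsBdef
  obtain ⟨a, BA, ha, hsA, ⟨eA⟩⟩ := hA sA
  obtain ⟨b, BB, hb, hsB, ⟨eB⟩⟩ := hB sB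
  obtain ⟨C, hmem, hC⟩ := tensor_subalg BA BB eA eB
  refine ⟨a, b, C, ha, hb, ⟨ha, BA, ⟨eA⟩⟩, ⟨hb, BB, ⟨eB⟩⟩, ?_, hC⟩
  intro x hx
  have hx' : x ∈ s := hx
  rw [show x = ∑ p ∈ rep x, p.1 ⊗ₜ[F] p.2 from hrep x]
  refine Subalgebra.sum_mem C fun p hp => ?_
  have hpA : p.1 ∈ sA := Finset.mem_biUnion.mpr ⟨x, hx', Finset.mem_image.mpr ⟨p, hp, rfl⟩⟩
  have hpB : p.2 ∈ sB := Finset.mem_biUnion.mpr ⟨x, hx', Finset.mem_image.mpr ⟨p, hp, rfl⟩⟩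
  exact hmem p.1 (hsA hpA) p.2 (hsB hpB)

end Aux

/-- For unital locally matrix algebras `A`, `B` over `F`, the tensor product `A ⊗_F B`
is a unital locally matrix algebra and `st(A ⊗_F B) = st(A) · st(B)`, encoded by
divisor sets. -/
theorem tensorProduct_isUnitalLocallyMatrix_and_steinitz
    (F : Type*) [Field F]
    (A B : Type*) [Ring A] [Ring B] [Algebra F A] [Algebra F B]
    (hA : IsUnitalLocallyMatrix F A) (hB : IsUnitalLocallyMatrix F B) :
    IsUnitalLocallyMatrix F (A ⊗[F] B) ∧
      {m : ℕ | ∃ d ∈ matrixDegrees F (A ⊗[F] B), m ∣ d} =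
        {m : ℕ | ∃ a ∈ matrixDegrees F A, ∃ b ∈ matrixDegrees F B, m ∣ a * b} := by
  constructor
  · intro s
    obtain ⟨a, b, C, ha, hb, _, _, hsC, hC⟩ := finset_subalg hA hB s
    exact ⟨a * b, C, Nat.one_le_iff_ne_zero.mpr (Nat.mul_ne_zero
      (Nat.one_le_iff_ne_zero.mp ha) (Nat.one_le_iff_ne_zero.mp hb)), hsC, hC⟩
  · ext m
    simp only [Set.mem_setOf_eq]
    constructor
    · rintro ⟨d, ⟨hd1, C, ⟨e⟩⟩, hmd⟩
      -- C is finite dimensional, spanned by a finite set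
      haveI : Module.Finite F C := Module.Finite.equiv e.symm.toLinearEquiv
      have hfg : (Subalgebra.toSubmodule C).FG := by
        rw [← Module.Finite.iff_fg]
        exact ‹Module.Finite F C›
      obtain ⟨s, hs⟩ := hfg
      obtain ⟨a, b, C', ha, hb, haD, hbD, hsC', ⟨e'⟩⟩ := finset_subalg hA hB s
      have hle : C ≤ C' := by
        intro x hx
        have hx' : x ∈ Subalgebra.toSubmodule C := hx
        rw [← hs] at hx'
        have : Submodule.span F (↑s : Set (A ⊗[F] B)) ≤ Subalgebra.toSubmodule C' :=
          Submodule.span_le.mpr hsC'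
        exact this hx'
      -- unital algebra map M_d → M_{a*b}
      have φ : Matrix (Fin d) (Fin d) F →ₐ[F] Matrix (Fin (a * b)) (Fin (a * b)) F :=
        (e'.toAlgHom.comp (Subalgebra.inclusion hle)).comp e.symm.toAlgHom
      have hdvd : d ∣ a * b := matrix_algHom_dvd hd1 φ
      exact ⟨a, haD, b, hbD, hmd.trans hdvd⟩
    · rintro ⟨a, ⟨ha1, BA, ⟨eA⟩⟩, b, ⟨hb1, BB, ⟨eB⟩⟩, hm⟩
      obtain ⟨C, _, hC⟩ := tensor_subalg BA BB eA eB
      exact ⟨a * b, ⟨Nat.one_le_iff_ne_zero.mpr (Nat.mul_ne_zero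
        (Nat.one_le_iff_ne_zero.mp ha1) (Nat.one_le_iff_ne_zero.mp hb1)), C, hC⟩, hm⟩
end

section
/- Let A be a unital locally matrix algebra over a field F. Then D(A) is directed under divisibility: for any m, n ∈ D(A) there exists k ∈ D(A) such that m divides k and n divides k. -/
open Matrix

lemma sum_stdBasis_diag (F : Type*) [Field F] (m : ℕ) :
    ∑ i : Fin m, single i i (1 : F) = 1 := by
  ext a b
  simp only [Matrix.sum_apply, Matrix.single, Matrix.one_apply, Matrix.of_apply]
  rcases eq_or_ne a b with rfl | h
  · simp
  · rw [if_neg h]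
    refine Finset.sum_eq_zero fun i _ => ?_
    by_cases hi : i = a <;> simp [hi, Ne.symm h, h]

lemma mulVecLin_sum {F : Type*} [Field F] {m k : ℕ} (p : Fin m → Matrix (Fin k) (Fin k) F) :
    (∑ i, p i).mulVecLin = ∑ i, (p i).mulVecLin := by
  induction (Finset.univ : Finset (Fin m)) using Finset.induction with
  | empty => simp [Matrix.mulVecLin_zero]
  | insert _ _ h ih => rw [Finset.sum_insert h, Finset.sum_insert h, Matrix.mulVecLin_add, ih]

lemma rank_sum_eq {F : Type*} [Field F] {m k : ℕ} (p : Fin m → Matrix (Fin k) (Fin k) F)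
    (hidem : ∀ i, p i * p i = p i) (horth : ∀ i j, i ≠ j → p i * p j = 0)
    (hsum : ∑ i, p i = 1) : ∑ i, (p i).rank = k := by
  classical
  set V : Fin m → Submodule F (Fin k → F) := fun i => LinearMap.range (p i).mulVecLin with hV
  have htop : iSup V = ⊤ := by
    rw [Submodule.eq_top_iff']
    intro v
    have hv : v = ∑ i, (p i).mulVecLin v := by
      have := congrArg Matrix.mulVecLin hsum
      rw [mulVecLin_sum] at this
      have := congrFun (congrArg DFunLike.coe this) v
      simpa [Matrix.mulVecLin_one] using this.symm
    rw [hv]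
    exact Submodule.sum_mem _ fun i _ => Submodule.mem_iSup_of_mem i ⟨v, rfl⟩
  have hind : iSupIndep V := by
    intro i
    rw [disjoint_iff_inf_le]
    intro x hx
    obtain ⟨hx1, hx2⟩ := hx
    obtain ⟨w, rfl⟩ := hx1
    have hker : (⨆ j, ⨆ _ : j ≠ i, V j) ≤ LinearMap.ker (p i).mulVecLin := by
      refine iSup_le fun j => iSup_le fun hj => ?_
      rintro y ⟨z, rfl⟩
      have : (p i).mulVecLin ((p j).mulVecLin z) = (p i * p j).mulVecLin z := by
        rw [Matrix.mulVecLin_mul]; rfl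
      rw [LinearMap.mem_ker, this, horth i j (Ne.symm hj), Matrix.mulVecLin_zero]
      rfl
    have h0 : (p i).mulVecLin ((p i).mulVecLin w) = 0 := hker hx2
    have : (p i).mulVecLin ((p i).mulVecLin w) = (p i).mulVecLin w := by
      have h2 : (p i).mulVecLin ((p i).mulVecLin w) = (p i * p i).mulVecLin w := by
        rw [Matrix.mulVecLin_mul]; rfl
      rw [h2, hidem i]
    rw [this] at h0
    simp [h0]
  have hint : DirectSum.IsInternal V :=
    DirectSum.isInternal_submodule_of_iSupIndep_of_iSup_eq_top hind htop
  have e := LinearEquiv.ofBijective (DirectSum.coeLinearMap V) hint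
  have h1 : Module.finrank F (Fin k → F) = ∑ i, Module.finrank F (V i) := by
    rw [← e.finrank_eq, Module.finrank_directSum]
  simpa [Matrix.rank, Module.finrank_fin_fun] using h1.symm

lemma rank_conj {F : Type*} [Field F] {k : ℕ} (u a : Matrix (Fin k) (Fin k) F)
    (hu : u * u = 1) : (u * a * u).rank = a.rank := by
  refine le_antisymm ((Matrix.rank_mul_le_left _ _).trans (Matrix.rank_mul_le_right _ _)) ?_
  have h : u * (u * a * u) * u = a := by
    have : u * (u * a * u) * u = (u * u) * a * (u * u) := by noncomm_ring
    rw [this, hu, one_mul, mul_one]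
  calc a.rank = (u * (u * a * u) * u).rank := by rw [h]
    _ ≤ (u * a * u).rank := (Matrix.rank_mul_le_left _ _).trans (Matrix.rank_mul_le_right _ _)

lemma swap_conj {F : Type*} [Field F] {m : ℕ} {i j : Fin m} (hij : i ≠ j) :
    ((1 : Matrix (Fin m) (Fin m) F) - single i i 1 - single j j 1
        + single i j 1 + single j i 1) * single j j 1 *
      ((1 : Matrix (Fin m) (Fin m) F) - single i i 1 - single j j 1
        + single i j 1 + single j i 1) = single i i 1 := by
  simp [sub_mul, add_mul, mul_sub, mul_add, hij, hij.symm]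

lemma swap_sq {F : Type*} [Field F] {m : ℕ} {i j : Fin m} (hij : i ≠ j) :
    ((1 : Matrix (Fin m) (Fin m) F) - single i i 1 - single j j 1
        + single i j 1 + single j i 1) *
      ((1 : Matrix (Fin m) (Fin m) F) - single i i 1 - single j j 1
        + single i j 1 + single j i 1) = 1 := by
  simp [sub_mul, add_mul, mul_sub, mul_add, hij, hij.symm]

lemma algHom_dvd {F : Type*} [Field F] {m k : ℕ}
    (f : Matrix (Fin m) (Fin m) F →ₐ[F] Matrix (Fin k) (Fin k) F) : m ∣ k := by
  classical
  set p : Fin m → Matrix (Fin k) (Fin k) F := fun i => f (single i i 1) with hp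
  have hidem : ∀ i, p i * p i = p i := fun i => by
    rw [hp, ← _root_.map_mul, Matrix.single_mul_single_same, mul_one]
  have horth : ∀ i j, i ≠ j → p i * p j = 0 := fun i j hij => by
    rw [hp, ← _root_.map_mul, Matrix.single_mul_single_of_ne (h := hij), _root_.map_zero]
  have hsum : ∑ i, p i = 1 := by
    rw [hp, ← _root_.map_sum, sum_stdBasis_diag, _root_.map_one]
  have hk := rank_sum_eq p hidem horth hsum
  have hrank : ∀ i j : Fin m, (p i).rank = (p j).rank := by
    intro i j
    rcases eq_or_ne i j with rfl | hij
    · rfl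
    · have hu := swap_sq (F := F) hij
      have hc := swap_conj (F := F) hij
      set u := (1 : Matrix (Fin m) (Fin m) F) - single i i 1 - single j j 1
        + single i j 1 + single j i 1 with hudef
      have : p i = f u * p j * f u := by
        rw [hp]; rw [← _root_.map_mul, ← _root_.map_mul, hc]
      rw [this]
      exact rank_conj (f u) (p j) (by rw [← _root_.map_mul, hu, _root_.map_one])
  rcases Nat.eq_zero_or_pos m with rfl | hm
  · simp only [Finset.univ_eq_empty, Finset.sum_empty] at hk
    exact hk ▸ dvd_refl 0
  · refine ⟨(p ⟨0, hm⟩).rank, ?_⟩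
    calc k = ∑ i, (p i).rank := hk.symm
      _ = ∑ _i : Fin m, (p ⟨0, hm⟩).rank :=
          Finset.sum_congr rfl fun i _ => hrank i ⟨0, hm⟩
      _ = m * (p ⟨0, hm⟩).rank := by simp [Finset.sum_const, mul_comm]

lemma exists_finset_span {F A : Type*} [Field F] [Ring A] [Algebra F A]
    (B : Subalgebra F A) [Module.Finite F B] :
    ∃ s : Finset A, ∀ C : Subalgebra F A, ↑s ⊆ (C : Set A) → B ≤ C := by
  classical
  obtain ⟨t, ht⟩ : (⊤ : Submodule F B).FG := Module.Finite.fg_top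
  refine ⟨t.image Subtype.val, fun C hC => ?_⟩
  intro x hx
  have hmem : (⟨x, hx⟩ : B) ∈ Submodule.span F (↑t : Set B) := by
    rw [ht]; trivial
  have : ∀ y : B, y ∈ Submodule.span F (↑t : Set B) → (y : A) ∈ C := by
    intro y hy
    refine Submodule.span_induction (fun z hz => ?_) (C.zero_mem) (fun a b _ _ ha hb => ?_)
      (fun c a _ ha => ?_) hy
    · exact hC (Finset.mem_image_of_mem Subtype.val hz)
    · exact C.add_mem ha hb
    · exact C.smul_mem ha c
  exact this ⟨x, hx⟩ hmem

theorem matrixDegrees_directed'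
    (F : Type*) [Field F] (A : Type*) [Ring A] [Algebra F A]
    (hA : ∀ s : Finset A, ∃ (n : ℕ) (B : Subalgebra F A), 1 ≤ n ∧ (↑s : Set A) ⊆ B ∧
      Nonempty (B ≃ₐ[F] Matrix (Fin n) (Fin n) F)) :
    ∀ m, (1 ≤ m ∧ ∃ B : Subalgebra F A, Nonempty (B ≃ₐ[F] Matrix (Fin m) (Fin m) F)) →
    ∀ n, (1 ≤ n ∧ ∃ B : Subalgebra F A, Nonempty (B ≃ₐ[F] Matrix (Fin n) (Fin n) F)) →
      ∃ k, (1 ≤ k ∧ ∃ B : Subalgebra F A, Nonempty (B ≃ₐ[F] Matrix (Fin k) (Fin k) F))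
        ∧ m ∣ k ∧ n ∣ k := by
  classical
  rintro m ⟨-, B, ⟨eB⟩⟩ n ⟨-, B', ⟨eB'⟩⟩
  haveI : Module.Finite F B := Module.Finite.equiv eB.symm.toLinearEquiv
  haveI : Module.Finite F B' := Module.Finite.equiv eB'.symm.toLinearEquiv
  obtain ⟨s1, hs1⟩ := exists_finset_span B
  obtain ⟨s2, hs2⟩ := exists_finset_span B'
  obtain ⟨k, C, hk1, hsub, ⟨eC⟩⟩ := hA (s1 ∪ s2)
  rw [Finset.coe_union] at hsub
  have hBC : B ≤ C := hs1 C ((Set.subset_union_left).trans hsub)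
  have hBC' : B' ≤ C := hs2 C ((Set.subset_union_right).trans hsub)
  have f : Matrix (Fin m) (Fin m) F →ₐ[F] Matrix (Fin k) (Fin k) F :=
    (eC.toAlgHom.comp (Subalgebra.inclusion hBC)).comp eB.symm.toAlgHom
  have g : Matrix (Fin n) (Fin n) F →ₐ[F] Matrix (Fin k) (Fin k) F :=
    (eC.toAlgHom.comp (Subalgebra.inclusion hBC')).comp eB'.symm.toAlgHom
  exact ⟨k, ⟨hk1, C, ⟨eC⟩⟩, algHom_dvd f, algHom_dvd g⟩


/-- For a unital locally matrix algebra `A`, the set `D(A)` is directed under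
divisibility. -/
theorem matrixDegrees_directed
    (F : Type*) [Field F] (A : Type*) [Ring A] [Algebra F A]
    (hA : IsUnitalLocallyMatrix F A) :
    ∀ m ∈ matrixDegrees F A, ∀ n ∈ matrixDegrees F A,
      ∃ k ∈ matrixDegrees F A, m ∣ k ∧ n ∣ k := by
  exact matrixDegrees_directed' F A hA
end
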